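/- Every weak cubical ω-groupoid (an algebra for the Penon-Kachour monad on cubical ω-sets in which every n-cell has directional inverses) carries the structure of an involutive weak cubical ω-category, with the self-duality in direction d given by the directional inverse in direction d; in the strict case this means: if C is a strict cubical ω-category in which every n-cell x has, for each d ∈ D, a cell x^{-1_d} with x ∘_{D,d} x^{-1_d} = ι_{D,d}(t_{D,d}(x)) and x^{-1_d} ∘_{D,d} x = ι_{D,d}(s_{D,d}(x)), then setting x^{*_{D,d}} := x^{-1_d} satisfies all the axioms of a strict involutive cubical ω-category (involutivity, commutativity of distinct-direction involutions, functoriality, and Hermitianity of identities). -/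
import Mathlib

namespace Cub

/-- commutation of two erasures of a finite set of directions -/
theorem ec (D : Finset ℕ) (d e : ℕ) : (D.erase d).erase e = (D.erase e).erase d :=
  Finset.erase_right_comm

/-- A cubical ω-set: a family of sets of `n`-cells indexed by the finite set `D ⊂ ℕ`
of directions (with `n = D.card`), together with source and target maps in each
direction, satisfying the cubical axioms. -/
structure OmegaSet where
  Q : Finset ℕ → Type
  s : ∀ (D : Finset ℕ) (d : ℕ), d ∈ D → Q D → Q (D.erase d)
  t : ∀ (D : Finset ℕ) (d : ℕ), d ∈ D → Q D → Q (D.erase d)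
  ss : ∀ (D : Finset ℕ) (d e : ℕ) (hd : d ∈ D) (he : e ∈ D) (hed : e ≠ d) (x : Q D),
    s (D.erase d) e (Finset.mem_erase_of_ne_of_mem hed he) (s D d hd x)
      = cast (congrArg Q (ec D e d))
          (s (D.erase e) d (Finset.mem_erase_of_ne_of_mem (Ne.symm hed) hd) (s D e he x))
  tt : ∀ (D : Finset ℕ) (d e : ℕ) (hd : d ∈ D) (he : e ∈ D) (hed : e ≠ d) (x : Q D),
    t (D.erase d) e (Finset.mem_erase_of_ne_of_mem hed he) (t D d hd x)
      = cast (congrArg Q (ec D e d))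
          (t (D.erase e) d (Finset.mem_erase_of_ne_of_mem (Ne.symm hed) hd) (t D e he x))
  st : ∀ (D : Finset ℕ) (d e : ℕ) (hd : d ∈ D) (he : e ∈ D) (hed : e ≠ d) (x : Q D),
    s (D.erase d) e (Finset.mem_erase_of_ne_of_mem hed he) (t D d hd x)
      = cast (congrArg Q (ec D e d))
          (t (D.erase e) d (Finset.mem_erase_of_ne_of_mem (Ne.symm hed) hd) (s D e he x))
  ts : ∀ (D : Finset ℕ) (d e : ℕ) (hd : d ∈ D) (he : e ∈ D) (hed : e ≠ d) (x : Q D),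
    t (D.erase d) e (Finset.mem_erase_of_ne_of_mem hed he) (s D d hd x)
      = cast (congrArg Q (ec D e d))
          (s (D.erase e) d (Finset.mem_erase_of_ne_of_mem (Ne.symm hed) hd) (t D e he x))

end Cub

namespace Cub

/-- A strict cubical ω-category (no involutions): a reflective cubical ω-magma with
associative unital compositions, functorial identities and the exchange law. -/
structure StrictCat extends OmegaSet where
  comp : ∀ (D : Finset ℕ) (d : ℕ) (hd : d ∈ D) (x y : Q D),
    s D d hd x = t D d hd y → Q D
  s_comp : ∀ (D : Finset ℕ) (d : ℕ) (hd : d ∈ D) (x y : Q D)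
      (h : s D d hd x = t D d hd y),
    s D d hd (comp D d hd x y h) = s D d hd y
  t_comp : ∀ (D : Finset ℕ) (d : ℕ) (hd : d ∈ D) (x y : Q D)
      (h : s D d hd x = t D d hd y),
    t D d hd (comp D d hd x y h) = t D d hd x
  s_comp_ne : ∀ (D : Finset ℕ) (d e : ℕ) (hd : d ∈ D) (he : e ∈ D) (hed : e ≠ d)
      (x y : Q D) (h : s D d hd x = t D d hd y)
      (h' : s (D.erase e) d (Finset.mem_erase_of_ne_of_mem (Ne.symm hed) hd) (s D e he x)
          = t (D.erase e) d (Finset.mem_erase_of_ne_of_mem (Ne.symm hed) hd) (s D e he y)),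
    s D e he (comp D d hd x y h)
      = comp (D.erase e) d (Finset.mem_erase_of_ne_of_mem (Ne.symm hed) hd)
          (s D e he x) (s D e he y) h'
  t_comp_ne : ∀ (D : Finset ℕ) (d e : ℕ) (hd : d ∈ D) (he : e ∈ D) (hed : e ≠ d)
      (x y : Q D) (h : s D d hd x = t D d hd y)
      (h' : s (D.erase e) d (Finset.mem_erase_of_ne_of_mem (Ne.symm hed) hd) (t D e he x)
          = t (D.erase e) d (Finset.mem_erase_of_ne_of_mem (Ne.symm hed) hd) (t D e he y)),
    t D e he (comp D d hd x y h)
      = comp (D.erase e) d (Finset.mem_erase_of_ne_of_mem (Ne.symm hed) hd)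
          (t D e he x) (t D e he y) h'
  iota : ∀ (D : Finset ℕ) (d : ℕ), d ∈ D → Q (D.erase d) → Q D
  s_iota : ∀ (D : Finset ℕ) (d : ℕ) (hd : d ∈ D) (x : Q (D.erase d)),
    s D d hd (iota D d hd x) = x
  t_iota : ∀ (D : Finset ℕ) (d : ℕ) (hd : d ∈ D) (x : Q (D.erase d)),
    t D d hd (iota D d hd x) = x
  s_iota_ne : ∀ (D : Finset ℕ) (d e : ℕ) (hd : d ∈ D) (he : e ∈ D) (hed : e ≠ d)
      (x : Q (D.erase d)),
    s D e he (iota D d hd x)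
      = iota (D.erase e) d (Finset.mem_erase_of_ne_of_mem (Ne.symm hed) hd)
          (cast (congrArg Q (ec D d e))
            (s (D.erase d) e (Finset.mem_erase_of_ne_of_mem hed he) x))
  t_iota_ne : ∀ (D : Finset ℕ) (d e : ℕ) (hd : d ∈ D) (he : e ∈ D) (hed : e ≠ d)
      (x : Q (D.erase d)),
    t D e he (iota D d hd x)
      = iota (D.erase e) d (Finset.mem_erase_of_ne_of_mem (Ne.symm hed) hd)
          (cast (congrArg Q (ec D d e))
            (t (D.erase d) e (Finset.mem_erase_of_ne_of_mem hed he) x))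
  assoc : ∀ (D : Finset ℕ) (d : ℕ) (hd : d ∈ D) (x y z : Q D)
      (hxy : s D d hd x = t D d hd y) (hyz : s D d hd y = t D d hd z)
      (h1 : s D d hd x = t D d hd (comp D d hd y z hyz))
      (h2 : s D d hd (comp D d hd x y hxy) = t D d hd z),
    comp D d hd x (comp D d hd y z hyz) h1 = comp D d hd (comp D d hd x y hxy) z h2
  unit_r : ∀ (D : Finset ℕ) (d : ℕ) (hd : d ∈ D) (x : Q D)
      (h : s D d hd x = t D d hd (iota D d hd (s D d hd x))),
    comp D d hd x (iota D d hd (s D d hd x)) h = x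
  unit_l : ∀ (D : Finset ℕ) (d : ℕ) (hd : d ∈ D) (x : Q D)
      (h : s D d hd (iota D d hd (t D d hd x)) = t D d hd x),
    comp D d hd (iota D d hd (t D d hd x)) x h = x
  iota_comp : ∀ (D : Finset ℕ) (d e : ℕ) (hd : d ∈ D) (he : e ∈ D.erase d) (he2 : e ∈ D)
      (x y : Q (D.erase d))
      (h : s (D.erase d) e he x = t (D.erase d) e he y)
      (h' : s D e he2 (iota D d hd x) = t D e he2 (iota D d hd y)),
    iota D d hd (comp (D.erase d) e he x y h)
      = comp D e he2 (iota D d hd x) (iota D d hd y) h'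
  exchange : ∀ (D : Finset ℕ) (e f : ℕ) (he : e ∈ D) (hf : f ∈ D) (_ : e ≠ f)
      (x y w z : Q D)
      (hxy : s D e he x = t D e he y) (hwz : s D e he w = t D e he z)
      (hxw : s D f hf x = t D f hf w) (hyz : s D f hf y = t D f hf z)
      (h1 : s D f hf (comp D e he x y hxy) = t D f hf (comp D e he w z hwz))
      (h2 : s D e he (comp D f hf x w hxw) = t D e he (comp D f hf y z hyz)),
    comp D f hf (comp D e he x y hxy) (comp D e he w z hwz) h1
      = comp D e he (comp D f hf x w hxw) (comp D f hf y z hyz) h2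

section Aux
set_option linter.unusedSectionVars false

variable (C : StrictCat)

theorem comp_congr {D : Finset ℕ} {d : ℕ} {hd : d ∈ D} {x x' y y' : C.Q D}
    (hx : x = x') (hy : y = y')
    (h : C.s D d hd x = C.t D d hd y) (h' : C.s D d hd x' = C.t D d hd y') :
    C.comp D d hd x y h = C.comp D d hd x' y' h' := by
  subst hx; subst hy; rfl

variable (inv : ∀ (D : Finset ℕ) (d : ℕ), d ∈ D → C.Q D → C.Q D)
    (hs : ∀ (D : Finset ℕ) (d : ℕ) (hd : d ∈ D) (x : C.Q D),
      C.s D d hd (inv D d hd x) = C.t D d hd x)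
    (ht : ∀ (D : Finset ℕ) (d : ℕ) (hd : d ∈ D) (x : C.Q D),
      C.t D d hd (inv D d hd x) = C.s D d hd x)
    (hinv_r : ∀ (D : Finset ℕ) (d : ℕ) (hd : d ∈ D) (x : C.Q D),
      C.comp D d hd x (inv D d hd x) (ht D d hd x).symm
        = C.iota D d hd (C.t D d hd x))
    (hinv_l : ∀ (D : Finset ℕ) (d : ℕ) (hd : d ∈ D) (x : C.Q D),
      C.comp D d hd (inv D d hd x) x (hs D d hd x)
        = C.iota D d hd (C.s D d hd x))

/-- applying a transverse source to a composability relation -/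
theorem sde (D : Finset ℕ) (d e : ℕ) (hd : d ∈ D) (he : e ∈ D) (hed : e ≠ d)
    (x y : C.Q D) (h : C.s D d hd x = C.t D d hd y) :
    C.s (D.erase e) d (Finset.mem_erase_of_ne_of_mem (Ne.symm hed) hd) (C.s D e he x)
      = C.t (D.erase e) d (Finset.mem_erase_of_ne_of_mem (Ne.symm hed) hd) (C.s D e he y) := by
  have h1 := C.ss D d e hd he hed x
  rw [h, C.st D d e hd he hed y] at h1
  exact (cast_inj _).mp h1.symm

/-- applying a transverse target to a composability relation -/
theorem tde (D : Finset ℕ) (d e : ℕ) (hd : d ∈ D) (he : e ∈ D) (hed : e ≠ d)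
    (x y : C.Q D) (h : C.s D d hd x = C.t D d hd y) :
    C.s (D.erase e) d (Finset.mem_erase_of_ne_of_mem (Ne.symm hed) hd) (C.t D e he x)
      = C.t (D.erase e) d (Finset.mem_erase_of_ne_of_mem (Ne.symm hed) hd) (C.t D e he y) := by
  have h1 := C.ts D d e hd he hed x
  rw [h, C.tt D d e hd he hed y] at h1
  exact (cast_inj _).mp h1.symm

include inv hs ht hinv_r hinv_l

/-- uniqueness of left inverses -/
theorem uniq (D : Finset ℕ) (d : ℕ) (hd : d ∈ D) (x y : C.Q D)
    (h1 : C.s D d hd y = C.t D d hd x)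
    (h2 : C.comp D d hd y x h1 = C.iota D d hd (C.s D d hd x)) :
    y = inv D d hd x := by
  have hA : C.s D d hd y
      = C.t D d hd (C.comp D d hd x (inv D d hd x) (ht D d hd x).symm) := by
    rw [C.t_comp]; exact h1
  have hB : C.s D d hd (C.comp D d hd y x h1) = C.t D d hd (inv D d hd x) := by
    rw [C.s_comp, ht]
  calc y = C.comp D d hd y (C.iota D d hd (C.s D d hd y)) (by rw [C.t_iota]) :=
        (C.unit_r D d hd y _).symm
    _ = C.comp D d hd y (C.comp D d hd x (inv D d hd x) (ht D d hd x).symm) hA := by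
        apply comp_congr C rfl
        rw [h1, hinv_r]
    _ = C.comp D d hd (C.comp D d hd y x h1) (inv D d hd x) hB :=
        C.assoc D d hd y x (inv D d hd x) h1 (ht D d hd x).symm hA hB
    _ = C.comp D d hd (C.iota D d hd (C.t D d hd (inv D d hd x))) (inv D d hd x)
          (by rw [C.s_iota]) := by
        apply comp_congr C _ rfl
        rw [h2, ht]
    _ = inv D d hd x := C.unit_l D d hd _ _

/-- left cancellation -/
theorem cancel (D : Finset ℕ) (d : ℕ) (hd : d ∈ D) (a b c : C.Q D)
    (hb : C.s D d hd a = C.t D d hd b) (hc : C.s D d hd a = C.t D d hd c)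
    (h : C.comp D d hd a b hb = C.comp D d hd a c hc) : b = c := by
  have key : ∀ z : C.Q D, ∀ hz : C.s D d hd a = C.t D d hd z,
      C.comp D d hd (inv D d hd a) (C.comp D d hd a z hz)
        (by rw [C.t_comp]; exact hs D d hd a)
      = z := by
    intro z hz
    calc C.comp D d hd (inv D d hd a) (C.comp D d hd a z hz) _
        = C.comp D d hd (C.comp D d hd (inv D d hd a) a (hs D d hd a)) z
            (by rw [C.s_comp]; exact hz) :=
          C.assoc D d hd (inv D d hd a) a z (hs D d hd a) hz _ _
      _ = C.comp D d hd (C.iota D d hd (C.t D d hd z)) z (by rw [C.s_iota]) := by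
          apply comp_congr C _ rfl
          rw [hinv_l, hz]
      _ = z := C.unit_l D d hd z _
  calc b = C.comp D d hd (inv D d hd a) (C.comp D d hd a b hb) _ := (key b hb).symm
    _ = C.comp D d hd (inv D d hd a) (C.comp D d hd a c hc) _ := by
        apply comp_congr C rfl h
    _ = c := key c hc



theorem iota_swap (D : Finset ℕ) (d e : ℕ) (hd : d ∈ D) (he : e ∈ D) (hed : e ≠ d)
    (v : C.Q ((D.erase d).erase e)) :
    C.iota D d hd (C.iota (D.erase d) e (Finset.mem_erase_of_ne_of_mem hed he) v)
      = C.iota D e he (C.iota (D.erase e) d (Finset.mem_erase_of_ne_of_mem (Ne.symm hed) hd)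
          (cast (congrArg C.Q (ec D d e)) v)) := by
  have he' : e ∈ D.erase d := Finset.mem_erase_of_ne_of_mem hed he
  have hd' : d ∈ D.erase e := Finset.mem_erase_of_ne_of_mem (Ne.symm hed) hd
  set u := C.iota (D.erase d) e he' v with hu
  set w := C.iota D d hd u with hw
  have hsw : C.s D e he w = C.iota (D.erase e) d hd' (cast (congrArg C.Q (ec D d e)) v) := by
    rw [hw, C.s_iota_ne D d e hd he hed, hu, C.s_iota]
  have htw : C.t D e he w = C.iota (D.erase e) d hd' (cast (congrArg C.Q (ec D d e)) v) := by
    rw [hw, C.t_iota_ne D d e hd he hed, hu, C.t_iota]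
  have hin : C.s (D.erase d) e he' u = C.t (D.erase d) e he' u := by
    rw [hu, C.s_iota, C.t_iota]
  have inner : C.comp (D.erase d) e he' u u hin = u := by
    calc C.comp (D.erase d) e he' u u hin
        = C.comp (D.erase d) e he' u (C.iota (D.erase d) e he' (C.s (D.erase d) e he' u))
            (by rw [C.s_iota, C.t_iota]) := by
          apply comp_congr C rfl
          rw [hu, C.s_iota]
      _ = u := C.unit_r (D.erase d) e he' u _
  have hww : C.s D e he w = C.t D e he w := hsw.trans htw.symm
  have hcompw : C.comp D e he w w hww = w :=
    (C.iota_comp D d e hd he' he u u hin hww).symm.trans (congrArg (C.iota D d hd) inner)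
  have hb : C.s D e he w = C.t D e he (C.iota D e he (C.s D e he w)) := by rw [C.t_iota]
  have step : C.comp D e he w (C.iota D e he (C.s D e he w)) hb = C.comp D e he w w hww :=
    (C.unit_r D e he w hb).trans hcompw.symm
  have hres : C.iota D e he (C.s D e he w) = w :=
    cancel C inv hs ht hinv_r hinv_l D e he w (C.iota D e he (C.s D e he w)) w hb hww step
  rw [hw, hu] at hres hsw ⊢
  rw [← hres, hsw]

end Aux
/-- a strict cubical ω-category in which every cell has directional
inverses becomes a strict involutive cubical ω-category by taking the self-duality
in direction `d` to be the directional inverse in direction `d`: all the structural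
and algebraic axioms on the involutions hold (structural source/target conditions,
involutivity, commutativity of distinct-direction involutions, functoriality of
involutions, and Hermitianity of identities). -/
theorem groupoid_inverses_give_involutive_structure (C : StrictCat)
    (inv : ∀ (D : Finset ℕ) (d : ℕ), d ∈ D → C.Q D → C.Q D)
    (hs : ∀ (D : Finset ℕ) (d : ℕ) (hd : d ∈ D) (x : C.Q D),
      C.s D d hd (inv D d hd x) = C.t D d hd x)
    (ht : ∀ (D : Finset ℕ) (d : ℕ) (hd : d ∈ D) (x : C.Q D),
      C.t D d hd (inv D d hd x) = C.s D d hd x)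
    (hinv_r : ∀ (D : Finset ℕ) (d : ℕ) (hd : d ∈ D) (x : C.Q D),
      C.comp D d hd x (inv D d hd x) (ht D d hd x).symm
        = C.iota D d hd (C.t D d hd x))
    (hinv_l : ∀ (D : Finset ℕ) (d : ℕ) (hd : d ∈ D) (x : C.Q D),
      C.comp D d hd (inv D d hd x) x (hs D d hd x)
        = C.iota D d hd (C.s D d hd x)) :
    -- structural axioms in the transverse directions
    (∀ (D : Finset ℕ) (d e : ℕ) (hd : d ∈ D) (he : e ∈ D) (hed : e ≠ d) (x : C.Q D),
      C.s D e he (inv D d hd x)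
        = inv (D.erase e) d (Finset.mem_erase_of_ne_of_mem (Ne.symm hed) hd)
            (C.s D e he x)) ∧
    (∀ (D : Finset ℕ) (d e : ℕ) (hd : d ∈ D) (he : e ∈ D) (hed : e ≠ d) (x : C.Q D),
      C.t D e he (inv D d hd x)
        = inv (D.erase e) d (Finset.mem_erase_of_ne_of_mem (Ne.symm hed) hd)
            (C.t D e he x)) ∧
    -- involutivity
    (∀ (D : Finset ℕ) (d : ℕ) (hd : d ∈ D) (x : C.Q D),
      inv D d hd (inv D d hd x) = x) ∧
    -- commutativity of involutions in distinct directions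
    (∀ (D : Finset ℕ) (e f : ℕ) (he : e ∈ D) (hf : f ∈ D), e ≠ f →
      ∀ x : C.Q D, inv D f hf (inv D e he x) = inv D e he (inv D f hf x)) ∧
    -- functoriality of involutions, same direction (anti-homomorphism)
    (∀ (D : Finset ℕ) (d : ℕ) (hd : d ∈ D) (x y : C.Q D)
        (h : C.s D d hd x = C.t D d hd y)
        (h' : C.s D d hd (inv D d hd y) = C.t D d hd (inv D d hd x)),
      inv D d hd (C.comp D d hd x y h)
        = C.comp D d hd (inv D d hd y) (inv D d hd x) h') ∧
    -- functoriality of involutions, distinct directions (homomorphism)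
    (∀ (D : Finset ℕ) (d e : ℕ) (hd : d ∈ D) (he : e ∈ D), e ≠ d →
      ∀ (x y : C.Q D) (h : C.s D d hd x = C.t D d hd y)
        (h' : C.s D d hd (inv D e he x) = C.t D d hd (inv D e he y)),
      inv D e he (C.comp D d hd x y h)
        = C.comp D d hd (inv D e he x) (inv D e he y) h') ∧
    -- Hermitianity of identities, same direction
    (∀ (D : Finset ℕ) (d : ℕ) (hd : d ∈ D) (x : C.Q (D.erase d)),
      inv D d hd (C.iota D d hd x) = C.iota D d hd x) ∧
    -- Hermitianity of identities, distinct directions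
    (∀ (D : Finset ℕ) (d e : ℕ) (hd : d ∈ D) (he : e ∈ D), e ≠ d →
      ∀ (he' : e ∈ D.erase d) (x : C.Q (D.erase d)),
      inv D e he (C.iota D d hd x) = C.iota D d hd (inv (D.erase d) e he' x)) := by
  have mm : ∀ {D : Finset ℕ} {d e : ℕ}, d ∈ D → e ≠ d → d ∈ D.erase e := fun hd hed =>
    Finset.mem_erase_of_ne_of_mem (Ne.symm hed) hd
  -- (1) transverse-source structural axiom
  have Hs : ∀ (D : Finset ℕ) (d e : ℕ) (hd : d ∈ D) (he : e ∈ D) (hed : e ≠ d) (x : C.Q D),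
      C.s D e he (inv D d hd x)
        = inv (D.erase e) d (Finset.mem_erase_of_ne_of_mem (Ne.symm hed) hd)
            (C.s D e he x) := by
    intro D d e hd he hed x
    have h1 : C.s (D.erase e) d (mm hd hed) (C.s D e he (inv D d hd x))
        = C.t (D.erase e) d (mm hd hed) (C.s D e he x) :=
      sde C D d e hd he hed (inv D d hd x) x (hs D d hd x)
    have h2 : C.comp (D.erase e) d (mm hd hed) (C.s D e he (inv D d hd x)) (C.s D e he x) h1
        = C.iota (D.erase e) d (mm hd hed) (C.s (D.erase e) d (mm hd hed) (C.s D e he x)) := by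
      calc C.comp (D.erase e) d (mm hd hed) (C.s D e he (inv D d hd x)) (C.s D e he x) h1
          = C.s D e he (C.comp D d hd (inv D d hd x) x (hs D d hd x)) :=
            (C.s_comp_ne D d e hd he hed (inv D d hd x) x (hs D d hd x) h1).symm
        _ = C.s D e he (C.iota D d hd (C.s D d hd x)) := by rw [hinv_l]
        _ = C.iota (D.erase e) d (mm hd hed)
              (cast (congrArg C.Q (ec D d e))
                (C.s (D.erase d) e (Finset.mem_erase_of_ne_of_mem hed he) (C.s D d hd x))) :=
            C.s_iota_ne D d e hd he hed _
        _ = C.iota (D.erase e) d (mm hd hed) (C.s (D.erase e) d (mm hd hed) (C.s D e he x)) := by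
            rw [C.ss D d e hd he hed x, cast_cast, cast_eq]
    exact uniq C inv hs ht hinv_r hinv_l (D.erase e) d (mm hd hed) (C.s D e he x) _ h1 h2
  -- (2) transverse-target structural axiom
  have Ht : ∀ (D : Finset ℕ) (d e : ℕ) (hd : d ∈ D) (he : e ∈ D) (hed : e ≠ d) (x : C.Q D),
      C.t D e he (inv D d hd x)
        = inv (D.erase e) d (Finset.mem_erase_of_ne_of_mem (Ne.symm hed) hd)
            (C.t D e he x) := by
    intro D d e hd he hed x
    have h1 : C.s (D.erase e) d (mm hd hed) (C.t D e he (inv D d hd x))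
        = C.t (D.erase e) d (mm hd hed) (C.t D e he x) :=
      tde C D d e hd he hed (inv D d hd x) x (hs D d hd x)
    have h2 : C.comp (D.erase e) d (mm hd hed) (C.t D e he (inv D d hd x)) (C.t D e he x) h1
        = C.iota (D.erase e) d (mm hd hed) (C.s (D.erase e) d (mm hd hed) (C.t D e he x)) := by
      calc C.comp (D.erase e) d (mm hd hed) (C.t D e he (inv D d hd x)) (C.t D e he x) h1
          = C.t D e he (C.comp D d hd (inv D d hd x) x (hs D d hd x)) :=
            (C.t_comp_ne D d e hd he hed (inv D d hd x) x (hs D d hd x) h1).symm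
        _ = C.t D e he (C.iota D d hd (C.s D d hd x)) := by rw [hinv_l]
        _ = C.iota (D.erase e) d (mm hd hed)
              (cast (congrArg C.Q (ec D d e))
                (C.t (D.erase d) e (Finset.mem_erase_of_ne_of_mem hed he) (C.s D d hd x))) :=
            C.t_iota_ne D d e hd he hed _
        _ = C.iota (D.erase e) d (mm hd hed) (C.s (D.erase e) d (mm hd hed) (C.t D e he x)) := by
            rw [C.ts D d e hd he hed x, cast_cast, cast_eq]
    exact uniq C inv hs ht hinv_r hinv_l (D.erase e) d (mm hd hed) (C.t D e he x) _ h1 h2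
  -- (3) involutivity
  have Hinv : ∀ (D : Finset ℕ) (d : ℕ) (hd : d ∈ D) (x : C.Q D),
      inv D d hd (inv D d hd x) = x := by
    intro D d hd x
    have h1 : C.s D d hd x = C.t D d hd (inv D d hd x) := (ht D d hd x).symm
    have h2 : C.comp D d hd x (inv D d hd x) h1
        = C.iota D d hd (C.s D d hd (inv D d hd x)) :=
      (hinv_r D d hd x).trans (congrArg _ (hs D d hd x).symm)
    exact (uniq C inv hs ht hinv_r hinv_l D d hd (inv D d hd x) x h1 h2).symm
  -- (7) Hermitianity, same direction
  have Hiota : ∀ (D : Finset ℕ) (d : ℕ) (hd : d ∈ D) (x : C.Q (D.erase d)),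
      inv D d hd (C.iota D d hd x) = C.iota D d hd x := by
    intro D d hd x
    have h1 : C.s D d hd (C.iota D d hd x) = C.t D d hd (C.iota D d hd x) := by
      rw [C.s_iota, C.t_iota]
    have h2 : C.comp D d hd (C.iota D d hd x) (C.iota D d hd x) h1
        = C.iota D d hd (C.s D d hd (C.iota D d hd x)) := by
      calc C.comp D d hd (C.iota D d hd x) (C.iota D d hd x) h1
          = C.comp D d hd (C.iota D d hd x)
              (C.iota D d hd (C.s D d hd (C.iota D d hd x))) (by rw [C.s_iota, C.t_iota]) := by
            apply comp_congr C rfl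
            rw [C.s_iota]
        _ = C.iota D d hd x := C.unit_r D d hd (C.iota D d hd x) _
        _ = C.iota D d hd (C.s D d hd (C.iota D d hd x)) := by rw [C.s_iota]
    exact (uniq C inv hs ht hinv_r hinv_l D d hd (C.iota D d hd x) (C.iota D d hd x) h1 h2).symm
  -- (5) anti-homomorphism, same direction
  have Hanti : ∀ (D : Finset ℕ) (d : ℕ) (hd : d ∈ D) (x y : C.Q D)
      (h : C.s D d hd x = C.t D d hd y)
      (h' : C.s D d hd (inv D d hd y) = C.t D d hd (inv D d hd x)),
      inv D d hd (C.comp D d hd x y h)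
        = C.comp D d hd (inv D d hd y) (inv D d hd x) h' := by
    intro D d hd x y h h'
    have hA : C.s D d hd (inv D d hd x) = C.t D d hd (C.comp D d hd x y h) := by
      rw [C.t_comp]; exact hs D d hd x
    have hB : C.s D d hd (C.comp D d hd (inv D d hd x) x (hs D d hd x)) = C.t D d hd y := by
      rw [C.s_comp]; exact h
    have stepA : C.comp D d hd (inv D d hd x) (C.comp D d hd x y h) hA = y := by
      calc C.comp D d hd (inv D d hd x) (C.comp D d hd x y h) hA
          = C.comp D d hd (C.comp D d hd (inv D d hd x) x (hs D d hd x)) y hB :=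
            C.assoc D d hd (inv D d hd x) x y (hs D d hd x) h hA hB
        _ = C.comp D d hd (C.iota D d hd (C.t D d hd y)) y (by rw [C.s_iota]) := by
            apply comp_congr C _ rfl
            rw [hinv_l, h]
        _ = y := C.unit_l D d hd y _
    have hC : C.s D d hd (inv D d hd y)
        = C.t D d hd (C.comp D d hd (inv D d hd x) (C.comp D d hd x y h) hA) := by
      rw [C.t_comp, ht, hs]; exact h.symm
    have h1 : C.s D d hd (C.comp D d hd (inv D d hd y) (inv D d hd x) h')
        = C.t D d hd (C.comp D d hd x y h) := by
      rw [C.s_comp, C.t_comp, hs]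
    have h2 : C.comp D d hd (C.comp D d hd (inv D d hd y) (inv D d hd x) h')
        (C.comp D d hd x y h) h1
        = C.iota D d hd (C.s D d hd (C.comp D d hd x y h)) := by
      calc C.comp D d hd (C.comp D d hd (inv D d hd y) (inv D d hd x) h')
              (C.comp D d hd x y h) h1
          = C.comp D d hd (inv D d hd y)
              (C.comp D d hd (inv D d hd x) (C.comp D d hd x y h) hA) hC :=
            (C.assoc D d hd (inv D d hd y) (inv D d hd x) (C.comp D d hd x y h) h' hA hC h1).symm
        _ = C.comp D d hd (inv D d hd y) y (hs D d hd y) := by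
            apply comp_congr C rfl stepA
        _ = C.iota D d hd (C.s D d hd y) := hinv_l D d hd y
        _ = C.iota D d hd (C.s D d hd (C.comp D d hd x y h)) := by rw [C.s_comp]
    exact (uniq C inv hs ht hinv_r hinv_l D d hd (C.comp D d hd x y h) _ h1 h2).symm
  -- (6) homomorphism, distinct directions
  have Hhom : ∀ (D : Finset ℕ) (d e : ℕ) (hd : d ∈ D) (he : e ∈ D), e ≠ d →
      ∀ (x y : C.Q D) (h : C.s D d hd x = C.t D d hd y)
        (h' : C.s D d hd (inv D e he x) = C.t D d hd (inv D e he y)),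
      inv D e he (C.comp D d hd x y h)
        = C.comp D d hd (inv D e he x) (inv D e he y) h' := by
    intro D d e hd he hed x y h h'
    have hde : d ≠ e := Ne.symm hed
    have h1' : C.s (D.erase e) d (mm hd hed) (C.s D e he (inv D e he x))
        = C.t (D.erase e) d (mm hd hed) (C.s D e he (inv D e he y)) :=
      sde C D d e hd he hed (inv D e he x) (inv D e he y) h'
    have hTT : C.s (D.erase e) d (mm hd hed) (C.t D e he x)
        = C.t (D.erase e) d (mm hd hed) (C.t D e he y) :=
      tde C D d e hd he hed x y h
    have h1 : C.s D e he (C.comp D d hd (inv D e he x) (inv D e he y) h')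
        = C.t D e he (C.comp D d hd x y h) := by
      calc C.s D e he (C.comp D d hd (inv D e he x) (inv D e he y) h')
          = C.comp (D.erase e) d (mm hd hed) (C.s D e he (inv D e he x))
              (C.s D e he (inv D e he y)) h1' :=
            C.s_comp_ne D d e hd he hed (inv D e he x) (inv D e he y) h' h1'
        _ = C.comp (D.erase e) d (mm hd hed) (C.t D e he x) (C.t D e he y) hTT :=
            comp_congr C (hs D e he x) (hs D e he y) h1' hTT
        _ = C.t D e he (C.comp D d hd x y h) :=
            (C.t_comp_ne D d e hd he hed x y h hTT).symm
    -- exchange-based computation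
    have hin1 : C.s (D.erase d) e (Finset.mem_erase_of_ne_of_mem hed he)
          (C.s D d hd (inv D e he x))
        = C.t (D.erase d) e (Finset.mem_erase_of_ne_of_mem hed he) (C.s D d hd x) :=
      sde C D e d he hd hde (inv D e he x) x (hs D e he x)
    have hin2 : C.s (D.erase d) e (Finset.mem_erase_of_ne_of_mem hed he)
          (C.t D d hd (inv D e he y))
        = C.t (D.erase d) e (Finset.mem_erase_of_ne_of_mem hed he) (C.t D d hd y) :=
      tde C D e d he hd hde (inv D e he y) y (hs D e he y)
    have hEx2 : C.s D d hd (C.comp D e he (inv D e he x) x (hs D e he x))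
        = C.t D d hd (C.comp D e he (inv D e he y) y (hs D e he y)) := by
      calc C.s D d hd (C.comp D e he (inv D e he x) x (hs D e he x))
          = C.comp (D.erase d) e (Finset.mem_erase_of_ne_of_mem hed he)
              (C.s D d hd (inv D e he x)) (C.s D d hd x) hin1 :=
            C.s_comp_ne D e d he hd hde (inv D e he x) x (hs D e he x) hin1
        _ = C.comp (D.erase d) e (Finset.mem_erase_of_ne_of_mem hed he)
              (inv (D.erase d) e (Finset.mem_erase_of_ne_of_mem hed he) (C.s D d hd x))
              (C.s D d hd x)
              (hs (D.erase d) e (Finset.mem_erase_of_ne_of_mem hed he) (C.s D d hd x)) :=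
            comp_congr C (Hs D e d he hd hde x) rfl hin1 _
        _ = C.iota (D.erase d) e (Finset.mem_erase_of_ne_of_mem hed he)
              (C.s (D.erase d) e (Finset.mem_erase_of_ne_of_mem hed he) (C.s D d hd x)) :=
            hinv_l (D.erase d) e (Finset.mem_erase_of_ne_of_mem hed he) (C.s D d hd x)
        _ = C.iota (D.erase d) e (Finset.mem_erase_of_ne_of_mem hed he)
              (C.s (D.erase d) e (Finset.mem_erase_of_ne_of_mem hed he) (C.t D d hd y)) := by
            rw [h]
        _ = C.comp (D.erase d) e (Finset.mem_erase_of_ne_of_mem hed he)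
              (inv (D.erase d) e (Finset.mem_erase_of_ne_of_mem hed he) (C.t D d hd y))
              (C.t D d hd y)
              (hs (D.erase d) e (Finset.mem_erase_of_ne_of_mem hed he) (C.t D d hd y)) :=
            (hinv_l (D.erase d) e (Finset.mem_erase_of_ne_of_mem hed he) (C.t D d hd y)).symm
        _ = C.comp (D.erase d) e (Finset.mem_erase_of_ne_of_mem hed he)
              (C.t D d hd (inv D e he y)) (C.t D d hd y) hin2 :=
            comp_congr C (Ht D e d he hd hde y).symm rfl _ hin2
        _ = C.t D d hd (C.comp D e he (inv D e he y) y (hs D e he y)) :=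
            (C.t_comp_ne D e d he hd hde (inv D e he y) y (hs D e he y) hin2).symm
    have hII : C.s D d hd (C.iota D e he (C.s D e he x))
        = C.t D d hd (C.iota D e he (C.s D e he y)) := by
      rw [C.s_iota_ne D e d he hd hde, C.t_iota_ne D e d he hd hde]
      exact congrArg _ (congrArg _ (sde C D d e hd he hed x y h))
    have h2 : C.comp D e he (C.comp D d hd (inv D e he x) (inv D e he y) h')
        (C.comp D d hd x y h) h1
        = C.iota D e he (C.s D e he (C.comp D d hd x y h)) := by
      calc C.comp D e he (C.comp D d hd (inv D e he x) (inv D e he y) h')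
              (C.comp D d hd x y h) h1
          = C.comp D d hd (C.comp D e he (inv D e he x) x (hs D e he x))
              (C.comp D e he (inv D e he y) y (hs D e he y)) hEx2 :=
            C.exchange D d e hd he hde (inv D e he x) (inv D e he y) x y
              h' h (hs D e he x) (hs D e he y) h1 hEx2
        _ = C.comp D d hd (C.iota D e he (C.s D e he x)) (C.iota D e he (C.s D e he y)) hII :=
            comp_congr C (hinv_l D e he x) (hinv_l D e he y) hEx2 hII
        _ = C.iota D e he (C.comp (D.erase e) d (mm hd hed) (C.s D e he x) (C.s D e he y)
              (sde C D d e hd he hed x y h)) :=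
            (C.iota_comp D e d he (mm hd hed) hd (C.s D e he x) (C.s D e he y)
              (sde C D d e hd he hed x y h) hII).symm
        _ = C.iota D e he (C.s D e he (C.comp D d hd x y h)) :=
            congrArg _ (C.s_comp_ne D d e hd he hed x y h _).symm
    exact (uniq C inv hs ht hinv_r hinv_l D e he (C.comp D d hd x y h) _ h1 h2).symm
  -- (8) Hermitianity, distinct directions
  have Hiota2 : ∀ (D : Finset ℕ) (d e : ℕ) (hd : d ∈ D) (he : e ∈ D), e ≠ d →
      ∀ (he' : e ∈ D.erase d) (x : C.Q (D.erase d)),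
      inv D e he (C.iota D d hd x) = C.iota D d hd (inv (D.erase d) e he' x) := by
    intro D d e hd he hed he' x
    have hin : C.s (D.erase d) e he' (inv (D.erase d) e he' x) = C.t (D.erase d) e he' x :=
      hs (D.erase d) e he' x
    have h1 : C.s D e he (C.iota D d hd (inv (D.erase d) e he' x))
        = C.t D e he (C.iota D d hd x) := by
      rw [C.s_iota_ne D d e hd he hed, C.t_iota_ne D d e hd he hed]
      exact congrArg _ (congrArg _ (hs (D.erase d) e (Finset.mem_erase_of_ne_of_mem hed he) x))
    have h2 : C.comp D e he (C.iota D d hd (inv (D.erase d) e he' x)) (C.iota D d hd x) h1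
        = C.iota D e he (C.s D e he (C.iota D d hd x)) := by
      calc C.comp D e he (C.iota D d hd (inv (D.erase d) e he' x)) (C.iota D d hd x) h1
          = C.iota D d hd (C.comp (D.erase d) e he' (inv (D.erase d) e he' x) x hin) :=
            (C.iota_comp D d e hd he' he (inv (D.erase d) e he' x) x hin h1).symm
        _ = C.iota D d hd (C.iota (D.erase d) e he' (C.s (D.erase d) e he' x)) :=
            congrArg _ (hinv_l (D.erase d) e he' x)
        _ = C.iota D e he (C.iota (D.erase e) d (mm hd hed)
              (cast (congrArg C.Q (ec D d e))
                (C.s (D.erase d) e (Finset.mem_erase_of_ne_of_mem hed he) x))) :=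
            iota_swap C inv hs ht hinv_r hinv_l D d e hd he hed
              (C.s (D.erase d) e (Finset.mem_erase_of_ne_of_mem hed he) x)
        _ = C.iota D e he (C.s D e he (C.iota D d hd x)) :=
            congrArg _ (C.s_iota_ne D d e hd he hed x).symm
    exact (uniq C inv hs ht hinv_r hinv_l D e he (C.iota D d hd x) _ h1 h2).symm
  -- (4) commutativity of involutions in distinct directions
  have Hcomm : ∀ (D : Finset ℕ) (e f : ℕ) (he : e ∈ D) (hf : f ∈ D), e ≠ f →
      ∀ x : C.Q D, inv D f hf (inv D e he x) = inv D e he (inv D f hf x) := by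
    intro D e f he hf hef x
    have hfe : f ≠ e := Ne.symm hef
    have h1 : C.s D f hf (inv D e he (inv D f hf x)) = C.t D f hf (inv D e he x) :=
      ((Hs D e f he hf hfe (inv D f hf x)).trans
        (congrArg _ (hs D f hf x))).trans (Ht D e f he hf hfe x).symm
    have h2 : C.comp D f hf (inv D e he (inv D f hf x)) (inv D e he x) h1
        = C.iota D f hf (C.s D f hf (inv D e he x)) := by
      calc C.comp D f hf (inv D e he (inv D f hf x)) (inv D e he x) h1
          = inv D e he (C.comp D f hf (inv D f hf x) x (hs D f hf x)) :=
            (Hhom D f e hf he hef (inv D f hf x) x (hs D f hf x) h1).symm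
        _ = inv D e he (C.iota D f hf (C.s D f hf x)) := congrArg _ (hinv_l D f hf x)
        _ = C.iota D f hf (inv (D.erase f) e (Finset.mem_erase_of_ne_of_mem hef he)
              (C.s D f hf x)) :=
            Hiota2 D f e hf he hef (Finset.mem_erase_of_ne_of_mem hef he) (C.s D f hf x)
        _ = C.iota D f hf (C.s D f hf (inv D e he x)) :=
            congrArg _ (Hs D e f he hf hfe x).symm
    exact (uniq C inv hs ht hinv_r hinv_l D f hf (inv D e he x) _ h1 h2).symm
  exact ⟨Hs, Ht, Hinv, Hcomm, Hanti, Hhom, Hiota, Hiota2⟩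

end Cub
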